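/- In a functional pure type system, if Γ ⊢ M : A and Γ ⊢ M : B then A and B are β-convertible. -/

import Mathlib

/-- Terms of a generic λ-calculus with sorts `S` and constants `C` (de Bruijn indices). -/
inductive Tm (S : Type) (C : Type) : Type
  | sort : S → Tm S C
  | const : C → Tm S C
  | var : Nat → Tm S C
  | app : Tm S C → Tm S C → Tm S C
  | lam : Tm S C → Tm S C → Tm S C
  | pi : Tm S C → Tm S C → Tm S C

namespace Tm
variable {S C : Type}

/-- Lifting of de Bruijn indices ≥ k by d. -/
def lift (d k : Nat) : Tm S C → Tm S C
  | sort s => sort s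
  | const c => const c
  | var i => if i < k then var i else var (i + d)
  | app m n => app (m.lift d k) (n.lift d k)
  | lam a m => lam (a.lift d k) (m.lift d (k+1))
  | pi a b => pi (a.lift d k) (b.lift d (k+1))

/-- Substitution of variable k by N. -/
def subst (k : Nat) (N : Tm S C) : Tm S C → Tm S C
  | sort s => sort s
  | const c => const c
  | var i => if i < k then var i else if i = k then N.lift k 0 else var (i-1)
  | app m n => app (subst k N m) (subst k N n)
  | lam a m => lam (subst k N a) (subst (k+1) N m)
  | pi a b => pi (subst k N a) (subst (k+1) N b)

/-- Lifting a simultaneous substitution under a binder. -/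
def upσ (σ : Nat → Tm S C) : Nat → Tm S C
  | 0 => var 0
  | i+1 => (σ i).lift 1 0

/-- Simultaneous substitution. -/
def msubst (σ : Nat → Tm S C) : Tm S C → Tm S C
  | sort s => sort s
  | const c => const c
  | var i => σ i
  | app m n => app (m.msubst σ) (n.msubst σ)
  | lam a m => lam (a.msubst σ) (m.msubst (upσ σ))
  | pi a b => pi (a.msubst σ) (b.msubst (upσ σ))

end Tm

/-- A rewrite rule [Δ] l ↝ r. -/
abbrev Rule (S C : Type) := List (Tm S C) × Tm S C × Tm S C

/-- One-step βR-reduction (contextual closure of β together with rules of R). -/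
inductive Step {S C : Type} (R : Rule S C → Prop) : Tm S C → Tm S C → Prop
  | beta {A M N} : Step R (.app (.lam A M) N) (Tm.subst 0 N M)
  | rew {Δ l r} (σ : Nat → Tm S C) : R (Δ, l, r) → Step R (l.msubst σ) (r.msubst σ)
  | appL {M M' N} : Step R M M' → Step R (.app M N) (.app M' N)
  | appR {M N N'} : Step R N N' → Step R (.app M N) (.app M N')
  | lamA {A A' M} : Step R A A' → Step R (.lam A M) (.lam A' M)
  | lamM {A M M'} : Step R M M' → Step R (.lam A M) (.lam A M')
  | piA {A A' B} : Step R A A' → Step R (.pi A B) (.pi A' B)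
  | piB {A B B'} : Step R B B' → Step R (.pi A B) (.pi A B')

/-- The empty rewrite system: pure β-reduction. -/
def NoRules {S C : Type} : Rule S C → Prop := fun _ => False

/-- Multistep reduction. -/
abbrev Red {S C : Type} (R : Rule S C → Prop) : Tm S C → Tm S C → Prop :=
  Relation.ReflTransGen (Step R)

/-- Conversion: smallest congruence containing the reduction. -/
abbrev Conv {S C : Type} (R : Rule S C → Prop) : Tm S C → Tm S C → Prop :=
  Relation.EqvGen (Step R)

/-- Pure β-reduction and conversion. -/
abbrev BetaRed {S C : Type} : Tm S C → Tm S C → Prop := Red NoRules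
abbrev BetaConv {S C : Type} : Tm S C → Tm S C → Prop := Conv NoRules

/-- Confluence of a relation. -/
def Confluent {X : Type} (r : X → X → Prop) : Prop :=
  ∀ a b c, Relation.ReflTransGen r a b → Relation.ReflTransGen r a c →
    ∃ d, Relation.ReflTransGen r b d ∧ Relation.ReflTransGen r c d

/-- A PTS specification: a set of sorts, axioms and rules. -/
structure Spec (S : Type) where
  sorts : Set S
  ax : S → S → Prop
  ru : S → S → S → Prop

/-- Functional specifications. -/
def Spec.Functional {S : Type} (sp : Spec S) : Prop :=
  (∀ s₁ s₂ s₂', sp.ax s₁ s₂ → sp.ax s₁ s₂' → s₂ = s₂') ∧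
  (∀ s₁ s₂ s₃ s₃', sp.ru s₁ s₂ s₃ → sp.ru s₁ s₂ s₃' → s₃ = s₃')

/-- Top-sorts: sorts with no axiom. -/
def Spec.TopSort {S : Type} (sp : Spec S) (s : S) : Prop :=
  s ∈ sp.sorts ∧ ¬ ∃ s', sp.ax s s'

mutual
/-- Well-formed contexts (generic typing, parametrized by a spec, a constant
signature with a validity predicate, and a rewrite system used in conversion). -/
inductive Wf {S C : Type} (sp : Spec S) (sig : C → Tm S C) (valid : C → Prop)
    (R : Rule S C → Prop) : List (Tm S C) → Prop
  | nil : Wf sp sig valid R []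
  | cons {Γ A s} : Typing sp sig valid R Γ A (.sort s) → Wf sp sig valid R (A :: Γ)

/-- Typing judgment Γ ⊢ M : A (conversion modulo βR). -/
inductive Typing {S C : Type} (sp : Spec S) (sig : C → Tm S C) (valid : C → Prop)
    (R : Rule S C → Prop) : List (Tm S C) → Tm S C → Tm S C → Prop
  | var {Γ i A} : Wf sp sig valid R Γ → Γ[i]? = some A →
      Typing sp sig valid R Γ (.var i) (A.lift (i+1) 0)
  | const {Γ c} : Wf sp sig valid R Γ → valid c →
      Typing sp sig valid R Γ (.const c) (sig c)
  | sort {Γ s₁ s₂} : Wf sp sig valid R Γ → sp.ax s₁ s₂ →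
      Typing sp sig valid R Γ (.sort s₁) (.sort s₂)
  | pi {Γ A B s₁ s₂ s₃} : Typing sp sig valid R Γ A (.sort s₁) →
      Typing sp sig valid R (A :: Γ) B (.sort s₂) → sp.ru s₁ s₂ s₃ →
      Typing sp sig valid R Γ (.pi A B) (.sort s₃)
  | lam {Γ A M B s} : Typing sp sig valid R (A :: Γ) M B →
      Typing sp sig valid R Γ (.pi A B) (.sort s) →
      Typing sp sig valid R Γ (.lam A M) (.pi A B)
  | app {Γ M N A B} : Typing sp sig valid R Γ M (.pi A B) →
      Typing sp sig valid R Γ N A →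
      Typing sp sig valid R Γ (.app M N) (Tm.subst 0 N B)
  | conv {Γ M A B s} : Typing sp sig valid R Γ M A →
      Typing sp sig valid R Γ B (.sort s) → Conv R A B →
      Typing sp sig valid R Γ M B
end

/-- Typing in a pure type system λS (no constants, no rewriting). -/
abbrev PTyping {S : Type} (sp : Spec S) :
    List (Tm S Empty) → Tm S Empty → Tm S Empty → Prop :=
  Typing sp (fun c => c.elim) (fun _ => False) NoRules

abbrev PWf {S : Type} (sp : Spec S) : List (Tm S Empty) → Prop :=
  Wf sp (fun c => c.elim) (fun _ => False) NoRules

/-- The two sorts of the λΠ-calculus. -/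
inductive LSort : Type
  | ty : LSort
  | kd : LSort

/-- The specification of the λΠ-calculus: Type : Kind, rules (Type,Type,Type),(Type,Kind,Kind). -/
def lpiSpec : Spec LSort where
  sorts := Set.univ
  ax s₁ s₂ := s₁ = .ty ∧ s₂ = .kd
  ru s₁ s₂ s₃ := s₁ = .ty ∧ ((s₂ = .ty ∧ s₃ = .ty) ∨ (s₂ = .kd ∧ s₃ = .kd))

/-- A rewrite rule is well-typed in the signature when both sides have a common type
in the plain λΠ-calculus (no rewriting) over that signature. -/
def RuleWellTyped {C : Type} (sig : C → Tm LSort C) (valid : C → Prop)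
    (ρ : Rule LSort C) : Prop :=
  ∃ A, Typing lpiSpec sig valid NoRules ρ.1 ρ.2.1 A ∧
       Typing lpiSpec sig valid NoRules ρ.1 ρ.2.2 A

/-- Well-formed signature: every constant's type is a λΠ type in the empty context. -/
def SigWellFormed {C : Type} (sig : C → Tm LSort C) (valid : C → Prop) : Prop :=
  ∀ c, valid c → ∃ s, Typing lpiSpec sig valid NoRules [] (sig c) (.sort s)

/-- Constants of the Cousineau–Dowek signature Σ_S. -/
inductive Const (S : Type) : Type
  | u : S → Const S
  | eps : S → Const S
  | dot : S → S → Const S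
  | pidot : S → S → S → Const S

/-- Types of the constants of Σ_S. -/
def sigS {S : Type} : Const S → Tm LSort (Const S)
  | .u _ => .sort .ty
  | .eps s => .pi (.const (.u s)) (.sort .ty)
  | .dot _ s₂ => .const (.u s₂)
  | .pidot s₁ s₂ s₃ =>
      .pi (.const (.u s₁))
        (.pi (.pi (.app (.const (.eps s₁)) (.var 0)) (.const (.u s₂))) (.const (.u s₃)))

/-- Valid constants of Σ_S (u_s, ε_s for sorts; ṡ₁ : u_{s₂} for axioms; π̇ for rules). -/
def validS {S : Type} (sp : Spec S) : Const S → Prop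
  | .u s => s ∈ sp.sorts
  | .eps s => s ∈ sp.sorts
  | .dot s₁ s₂ => sp.ax s₁ s₂
  | .pidot s₁ s₂ s₃ => sp.ru s₁ s₂ s₃

/-- The rewrite system R_S: ε_{s₂} ṡ₁ ↝ u_{s₁} and
ε_{s₃}(π̇_{s₁s₂s₃} A B) ↝ Πx:(ε_{s₁}A). ε_{s₂}(B x). -/
inductive RS {S : Type} (sp : Spec S) : Rule LSort (Const S) → Prop
  | axRule {s₁ s₂} : sp.ax s₁ s₂ →
      RS sp ([], .app (.const (.eps s₂)) (.const (.dot s₁ s₂)), .const (.u s₁))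
  | piRule {s₁ s₂ s₃} : sp.ru s₁ s₂ s₃ →
      RS sp ([.pi (.app (.const (.eps s₁)) (.var 0)) (.const (.u s₂)), .const (.u s₁)],
             .app (.const (.eps s₃)) (.app (.app (.const (.pidot s₁ s₂ s₃)) (.var 1)) (.var 0)),
             .pi (.app (.const (.eps s₁)) (.var 1)) (.app (.const (.eps s₂)) (.app (.var 1) (.var 0))))

/-- Typing in λΠ/S. -/
abbrev LTyping {S : Type} (sp : Spec S) :
    List (Tm LSort (Const S)) → Tm LSort (Const S) → Tm LSort (Const S) → Prop :=
  Typing lpiSpec sigS (validS sp) (RS sp)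

abbrev LWf {S : Type} (sp : Spec S) : List (Tm LSort (Const S)) → Prop :=
  Wf lpiSpec sigS (validS sp) (RS sp)

mutual
/-- Forward translation of terms: |M|_Γ = M'. -/
inductive TrT {S : Type} (sp : Spec S) :
    List (Tm S Empty) → Tm S Empty → Tm LSort (Const S) → Prop
  | sort {Γ s s'} : sp.ax s s' → TrT sp Γ (.sort s) (.const (.dot s s'))
  | var {Γ i} : TrT sp Γ (.var i) (.var i)
  | app {Γ M M' N N'} : TrT sp Γ M M' → TrT sp Γ N N' →
      TrT sp Γ (.app M N) (.app M' N')
  | lam {Γ A A' M M'} : TrTy sp Γ A A' → TrT sp (A :: Γ) M M' →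
      TrT sp Γ (.lam A M) (.lam A' M')
  | pi {Γ A B s₁ s₂ s₃ A' A'' B'} : PTyping sp Γ A (.sort s₁) →
      PTyping sp (A :: Γ) B (.sort s₂) → sp.ru s₁ s₂ s₃ →
      TrT sp Γ A A' → TrTy sp Γ A A'' → TrT sp (A :: Γ) B B' →
      TrT sp Γ (.pi A B) (.app (.app (.const (.pidot s₁ s₂ s₃)) A') (.lam A'' B'))

/-- Forward translation of types: ‖A‖_Γ = A'. -/
inductive TrTy {S : Type} (sp : Spec S) :
    List (Tm S Empty) → Tm S Empty → Tm LSort (Const S) → Prop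
  | sort {Γ s} : TrTy sp Γ (.sort s) (.const (.u s))
  | pi {Γ A A' B B'} : TrTy sp Γ A A' → TrTy sp (A :: Γ) B B' →
      TrTy sp Γ (.pi A B) (.pi A' B')
  | el {Γ A s A'} : PTyping sp Γ A (.sort s) → TrT sp Γ A A' →
      TrTy sp Γ A (.app (.const (.eps s)) A')
end

/-- Forward translation of contexts ‖Γ‖. -/
inductive TrCtx {S : Type} (sp : Spec S) :
    List (Tm S Empty) → List (Tm LSort (Const S)) → Prop
  | nil : TrCtx sp [] []
  | cons {Γ Γ' A A'} : TrCtx sp Γ Γ' → TrTy sp Γ A A' → TrCtx sp (A :: Γ) (A' :: Γ')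

mutual
/-- Inverse translation of terms: φ(M) = M'. -/
inductive InvT {S : Type} : Tm LSort (Const S) → Tm S Empty → Prop
  | dot {s₁ s₂} : InvT (.const (.dot s₁ s₂)) (.sort s₁)
  | pidot {s₁ s₂ s₃} : InvT (.const (.pidot s₁ s₂ s₃))
      (.lam (.sort s₁) (.lam (.pi (.var 0) (.sort s₂))
        (.pi (.var 1) (.app (.var 1) (.var 0)))))
  | var {i} : InvT (.var i) (.var i)
  | app {M M' N N'} : InvT M M' → InvT N N' → InvT (.app M N) (.app M' N')
  | lam {A A' M M'} : InvTy A A' → InvT M M' → InvT (.lam A M) (.lam A' M')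

/-- Inverse translation of types: ψ(A) = A'. -/
inductive InvTy {S : Type} : Tm LSort (Const S) → Tm S Empty → Prop
  | u {s} : InvTy (.const (.u s)) (.sort s)
  | el {s M M'} : InvT M M' → InvTy (.app (.const (.eps s)) M) M'
  | pi {A A' B B'} : InvTy A A' → InvTy B B' → InvTy (.pi A B) (.pi A' B')
end

/-- Inverse translation of (object) contexts ψ(Γ). -/
inductive InvCtx {S : Type} : List (Tm LSort (Const S)) → List (Tm S Empty) → Prop
  | nil : InvCtx [] []
  | cons {Γ Γ' A A'} : InvCtx Γ Γ' → InvTy A A' → InvCtx (A :: Γ) (A' :: Γ')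

/-- The minimal completion S* of S: a fresh top-sort τ, axioms s:τ for the top-sorts
of S, and rules (s₁,s₂,τ) for all pairs having no rule. -/
def mc {S : Type} (sp : Spec S) (τ : S) : Spec S where
  sorts := insert τ sp.sorts
  ax s₁ s₂ := sp.ax s₁ s₂ ∨ (s₁ ∈ sp.sorts ∧ (¬ ∃ s, sp.ax s₁ s) ∧ s₂ = τ)
  ru s₁ s₂ s₃ := sp.ru s₁ s₂ s₃ ∨
      (s₁ ∈ insert τ sp.sorts ∧ s₂ ∈ insert τ sp.sorts ∧ (¬ ∃ s, sp.ru s₁ s₂ s) ∧ s₃ = τ)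

/-- S' is a completion of S. -/
def IsCompletion {S : Type} (sp sp' : Spec S) : Prop :=
  sp.sorts ⊆ sp'.sorts ∧
  (∀ s₁ s₂, sp.ax s₁ s₂ → sp'.ax s₁ s₂) ∧
  (∀ s₁ s₂ s₃, sp.ru s₁ s₂ s₃ → sp'.ru s₁ s₂ s₃) ∧
  (∀ s₁ ∈ sp.sorts, ∃ s₂, sp'.ax s₁ s₂) ∧
  (∀ s₁ ∈ sp'.sorts, ∀ s₂ ∈ sp'.sorts, ∃ s₃, sp'.ru s₁ s₂ s₃)

/-- Kind-level β-reduction in a λΠ-calculus modulo: contraction of a β-redex whose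
type has type Kind, under any context. -/
inductive KindStep {C : Type} (sig : C → Tm LSort C) (valid : C → Prop)
    (R : Rule LSort C → Prop) : List (Tm LSort C) → Tm LSort C → Tm LSort C → Prop
  | beta {Γ A M N T} :
      Typing lpiSpec sig valid R Γ (.app (.lam A M) N) T →
      Typing lpiSpec sig valid R Γ T (.sort .kd) →
      KindStep sig valid R Γ (.app (.lam A M) N) (Tm.subst 0 N M)
  | appL {Γ M M' N} : KindStep sig valid R Γ M M' →
      KindStep sig valid R Γ (.app M N) (.app M' N)
  | appR {Γ M N N'} : KindStep sig valid R Γ N N' →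
      KindStep sig valid R Γ (.app M N) (.app M N')
  | lamA {Γ A A' M} : KindStep sig valid R Γ A A' →
      KindStep sig valid R Γ (.lam A M) (.lam A' M)
  | lamM {Γ A M M'} : KindStep sig valid R (A :: Γ) M M' →
      KindStep sig valid R Γ (.lam A M) (.lam A M')
  | piA {Γ A A' B} : KindStep sig valid R Γ A A' →
      KindStep sig valid R Γ (.pi A B) (.pi A' B)
  | piB {Γ A B B'} : KindStep sig valid R (A :: Γ) B B' →
      KindStep sig valid R Γ (.pi A B) (.pi A B')

/-- A term with no Kind-level β-redexes (a λΠ⁻ term). -/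
def KindFree {C : Type} (sig : C → Tm LSort C) (valid : C → Prop)
    (R : Rule LSort C → Prop) (Γ : List (Tm LSort C)) (M : Tm LSort C) : Prop :=
  ∀ N, ¬ KindStep sig valid R Γ M N

/-- Object contexts of λΠ/S: every declared type has type Type. -/
def ObjCtx {S : Type} (sp : Spec S) (Γ : List (Tm LSort (Const S))) : Prop :=
  ∀ i A, Γ[i]? = some A → LTyping sp (Γ.drop (i+1)) A (.sort .ty)

/-- The τ-height measure ℋ_τ on Γ-types of λS*. -/
inductive Ht {S : Type} (sp : Spec S) (τ : S) :
    List (Tm S Empty) → Tm S Empty → Nat → Prop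
  | ntau {Γ A s} : PTyping (mc sp τ) Γ A (.sort s) → s ≠ τ → Ht sp τ Γ A 0
  | srt {Γ s'} : PTyping (mc sp τ) Γ (.sort s') (.sort τ) → Ht sp τ Γ (.sort s') 0
  | pi {Γ B C m n} : PTyping (mc sp τ) Γ (.pi B C) (.sort τ) →
      Ht sp τ Γ B m → Ht sp τ (B :: Γ) C n → Ht sp τ Γ (.pi B C) (max m n + 1)

/-- The reducibility predicate, stratified by the τ-height of the type. -/
def RedN {S : Type} (sp : Spec S) (τ : S) :
    Nat → List (Tm S Empty) → Tm S Empty → Tm S Empty → Prop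
  | n, Γ, M, A =>
    PWf sp Γ ∧ ∃ s, PTyping (mc sp τ) Γ M A ∧ PTyping (mc sp τ) Γ A (.sort s) ∧
      ((s ≠ τ ∨ ∃ s' ∈ sp.sorts, A = .sort s') →
        ∃ M' A', BetaRed M M' ∧ BetaRed A A' ∧ PTyping sp Γ M' A') ∧
      (s = τ → ∀ B C, A = .pi B C → ∀ N,
        (∀ m (hm : m < n), Ht sp τ Γ B m → RedN sp τ m Γ N B) →
        ∀ m (hm : m < n), Ht sp τ Γ (Tm.subst 0 N C) m →
          RedN sp τ m Γ (.app M N) (Tm.subst 0 N C))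
  termination_by n => n

/-- The reducibility predicate Γ ⊨_S M : A. -/
def Reducible {S : Type} (sp : Spec S) (τ : S)
    (Γ : List (Tm S Empty)) (M A : Tm S Empty) : Prop :=
  ∃ n, Ht sp τ Γ A n ∧ RedN sp τ n Γ M A


namespace PTSAux
open Tm
variable {S C : Type}

theorem lift_lift_perm (M : Tm S C) : ∀ d m i k, k ≤ i →
    (M.lift m i).lift d k = (M.lift d k).lift m (i + d) := by
  induction M with
  | sort s => intros; rfl
  | const c => intros; rfl
  | var j =>
    intro d m i k hk
    simp only [lift]
    split_ifs <;> simp only [lift] <;> split_ifs <;>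
      first | rfl | omega | (exfalso; omega) | (congr 1; omega)
  | app m n ihm ihn => intro d m' i k hk; simp [lift, ihm _ _ _ _ hk, ihn _ _ _ _ hk]
  | lam a m iha ihm =>
    intro d m' i k hk
    simp only [lift, iha _ _ _ _ hk]
    rw [ihm d m' (i+1) (k+1) (by omega)]
    congr 2
    omega
  | pi a b iha ihb =>
    intro d m' i k hk
    simp only [lift, iha _ _ _ _ hk]
    rw [ihb d m' (i+1) (k+1) (by omega)]
    congr 2
    omega

theorem lift_lift_add (M : Tm S C) : ∀ d m i k, i ≤ k → k ≤ i + m →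
    (M.lift m i).lift d k = M.lift (m + d) i := by
  induction M with
  | sort s => intros; rfl
  | const c => intros; rfl
  | var j =>
    intro d m i k h1 h2
    simp only [lift]
    split_ifs <;> simp only [lift] <;> split_ifs <;>
      first | rfl | omega | (exfalso; omega) | (congr 1; omega)
  | app m n ihm ihn => intro d m' i k h1 h2; simp [lift, ihm _ _ _ _ h1 h2, ihn _ _ _ _ h1 h2]
  | lam a m iha ihm =>
    intro d m' i k h1 h2
    simp [lift, iha _ _ _ _ h1 h2, ihm d m' (i+1) (k+1) (by omega) (by omega)]
  | pi a b iha ihb =>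
    intro d m' i k h1 h2
    simp [lift, iha _ _ _ _ h1 h2, ihb d m' (i+1) (k+1) (by omega) (by omega)]

theorem lift_subst (M : Tm S C) : ∀ (N : Tm S C) d j k, j ≤ k →
    (Tm.subst j N M).lift d k = Tm.subst j (N.lift d (k - j)) (M.lift d (k + 1)) := by
  induction M with
  | sort s => intros; rfl
  | const c => intros; rfl
  | var i =>
    intro N d j k hjk
    simp only [subst, lift]
    rcases lt_trichotomy i j with h | h | h
    · rw [if_pos h, if_pos (show i < k + 1 by omega)]
      simp only [lift, subst]
      rw [if_pos (show i < k by omega), if_pos h]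
    · subst h
      rw [if_neg (lt_irrefl i), if_pos (rfl : i = i), if_pos (show i < k + 1 by omega)]
      simp only [subst]
      rw [if_pos True.intro]
      rw [lift_lift_perm N i d (k - i) 0 (Nat.zero_le _)]
      rw [show k - i + i = k by omega]
      try rw [if_neg (lt_irrefl i)]
    · rw [if_neg (by omega), if_neg (by omega)]
      by_cases h2 : i < k + 1
      · rw [if_pos h2]
        simp only [lift, subst]
        rw [if_pos (show i - 1 < k by omega), if_neg (by omega), if_neg (by omega)]
      · rw [if_neg h2]
        simp only [lift, subst]
        rw [if_neg (by omega), if_neg (by omega), if_neg (by omega)]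
        congr 1
        omega
  | app m n ihm ihn => intro N d j k h; simp [subst, lift, ihm _ _ _ _ h, ihn _ _ _ _ h]
  | lam a m iha ihm =>
    intro N d j k h
    simp only [subst, lift, iha _ _ _ _ h]
    rw [ihm N d (j+1) (k+1) (by omega), show k + 1 - (j + 1) = k - j from by omega]
  | pi a b iha ihb =>
    intro N d j k h
    simp only [subst, lift, iha _ _ _ _ h]
    rw [ihb N d (j+1) (k+1) (by omega), show k + 1 - (j + 1) = k - j from by omega]

theorem subst_lift (M : Tm S C) : ∀ (N : Tm S C) d i k, i ≤ k →
    Tm.subst (k + d) N (M.lift d i) = (Tm.subst k N M).lift d i := by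
  induction M with
  | sort s => intros; rfl
  | const c => intros; rfl
  | var j =>
    intro N d i k hik
    simp only [lift, subst]
    by_cases hji : j < i
    · rw [if_pos hji, if_pos (show j < k by omega)]
      simp only [subst, lift]
      rw [if_pos (show j < k + d by omega), if_pos hji]
    · rw [if_neg hji]
      rcases lt_trichotomy j k with h | h | h
      · rw [if_pos h]
        simp only [subst, lift]
        rw [if_pos (show j + d < k + d by omega), if_neg hji]
      · subst h
        rw [if_neg (lt_irrefl j), if_pos (rfl : j = j)]
        simp only [subst]
        try rw [if_neg (lt_irrefl (j+d))]
        rw [if_pos True.intro]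
        exact (lift_lift_add N d j 0 i (by omega) (by omega)).symm
      · rw [if_neg (by omega), if_neg (by omega)]
        simp only [subst, lift]
        rw [if_neg (by omega), if_neg (by omega), if_neg (by omega)]
        congr 1
        omega
  | app m n ihm ihn => intro N d i k h; simp [subst, lift, ihm _ _ _ _ h, ihn _ _ _ _ h]
  | lam a m iha ihm =>
    intro N d i k h
    simp only [subst, lift, iha _ _ _ _ h]
    have := ihm N d (i+1) (k+1) (by omega)
    rw [show k + 1 + d = k + d + 1 by omega] at this
    rw [this]
  | pi a b iha ihb =>
    intro N d i k h
    simp only [subst, lift, iha _ _ _ _ h]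
    have := ihb N d (i+1) (k+1) (by omega)
    rw [show k + 1 + d = k + d + 1 by omega] at this
    rw [this]

theorem subst_lift_cancel (M : Tm S C) : ∀ (Q : Tm S C) d i k, i ≤ k → k ≤ i + d →
    Tm.subst k Q (M.lift (d + 1) i) = M.lift d i := by
  induction M with
  | sort s => intros; rfl
  | const c => intros; rfl
  | var j =>
    intro Q d i k h1 h2
    simp only [lift]
    by_cases h : j < i
    · rw [if_pos h]
      simp only [subst]
      rw [if_pos (by omega), if_pos h]
    · rw [if_neg h]
      simp only [subst]
      rw [if_neg (by omega), if_neg (by omega)]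
      all_goals try rw [if_neg h]
      all_goals first | rfl | (congr 1; omega)
  | app m n ihm ihn => intro Q d i k h1 h2; simp [subst, lift, ihm _ _ _ _ h1 h2, ihn _ _ _ _ h1 h2]
  | lam a m iha ihm =>
    intro Q d i k h1 h2
    simp [subst, lift, iha _ _ _ _ h1 h2, ihm Q d (i+1) (k+1) (by omega) (by omega)]
  | pi a b iha ihb =>
    intro Q d i k h1 h2
    simp [subst, lift, iha _ _ _ _ h1 h2, ihb Q d (i+1) (k+1) (by omega) (by omega)]

theorem subst_subst (M : Tm S C) : ∀ (N P : Tm S C) j k, j ≤ k →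
    Tm.subst k N (Tm.subst j P M) =
      Tm.subst j (Tm.subst (k - j) N P) (Tm.subst (k + 1) N M) := by
  induction M with
  | sort s => intros; rfl
  | const c => intros; rfl
  | var i =>
    intro N P j k hjk
    simp only [subst]
    rcases lt_trichotomy i j with h | h | h
    · rw [if_pos h, if_pos (show i < k + 1 by omega)]
      simp only [subst]
      rw [if_pos (show i < k by omega), if_pos h]
    · subst h
      rw [if_neg (lt_irrefl i), if_pos (rfl : i = i), if_pos (show i < k + 1 by omega)]
      simp only [subst]
      try rw [if_neg (lt_irrefl i)]
      rw [if_pos True.intro]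
      have := subst_lift P N i 0 (k - i) (Nat.zero_le _)
      rw [show k - i + i = k by omega] at this
      exact this
    · rw [if_neg (show ¬ i < j by omega), if_neg (show ¬ i = j by omega)]
      simp only [subst]
      split_ifs <;> (try simp only [subst]) <;> try split_ifs
      all_goals
        first
          | rfl
          | omega
          | (exfalso; omega)
          | (congr 1; omega)
          | (exact (subst_lift_cancel N _ k 0 j (by omega) (by omega)).symm)
          | (exact subst_lift_cancel N _ k 0 j (by omega) (by omega))
  | app m n ihm ihn => intro N P j k h; simp [subst, ihm _ _ _ _ h, ihn _ _ _ _ h]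
  | lam a m iha ihm =>
    intro N P j k h
    simp only [subst, iha _ _ _ _ h]
    rw [ihm N P (j+1) (k+1) (by omega), show k + 1 - (j + 1) = k - j from by omega]
  | pi a b iha ihb =>
    intro N P j k h
    simp only [subst, iha _ _ _ _ h]
    rw [ihb N P (j+1) (k+1) (by omega), show k + 1 - (j + 1) = k - j from by omega]



section ParDev
open Tm
variable {S C : Type}

/-- Parallel β-reduction. -/
inductive Par : Tm S C → Tm S C → Prop
  | sort (s) : Par (.sort s) (.sort s)
  | const (c) : Par (.const c) (.const c)
  | var (i) : Par (.var i) (.var i)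
  | app {M M' N N'} : Par M M' → Par N N' → Par (.app M N) (.app M' N')
  | lam {A A' M M'} : Par A A' → Par M M' → Par (.lam A M) (.lam A' M')
  | pi {A A' B B'} : Par A A' → Par B B' → Par (.pi A B) (.pi A' B')
  | beta {A M M' N N'} : Par M M' → Par N N' →
      Par (.app (.lam A M) N) (Tm.subst 0 N' M')

theorem Par.refl (M : Tm S C) : Par M M := by
  induction M with
  | sort s => exact .sort s
  | const c => exact .const c
  | var i => exact .var i
  | app m n ihm ihn => exact .app ihm ihn
  | lam a m iha ihm => exact .lam iha ihm
  | pi a b iha ihb => exact .pi iha ihb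

theorem Par.lift {M M' : Tm S C} (h : Par M M') :
    ∀ d k, Par (M.lift d k) (M'.lift d k) := by
  induction h with
  | sort s => intro d k; exact .refl _
  | const c => intro d k; exact .refl _
  | var i => intro d k; exact .refl _
  | app _ _ ihm ihn => intro d k; exact .app (ihm d k) (ihn d k)
  | lam _ _ iha ihm => intro d k; exact .lam (iha d k) (ihm d (k+1))
  | pi _ _ iha ihb => intro d k; exact .pi (iha d k) (ihb d (k+1))
  | @beta A M M' N N' _ _ ihm ihn =>
    intro d k
    have : (Tm.subst 0 N' M').lift d k
        = Tm.subst 0 (N'.lift d k) (M'.lift d (k+1)) := by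
      rw [lift_subst M' N' d 0 k (Nat.zero_le _)]
      simp
    rw [this]
    simp only [Tm.lift]
    exact .beta (ihm d (k+1)) (ihn d k)

theorem Par.subst {N N' : Tm S C} (hN : Par N N') {M M' : Tm S C} (hM : Par M M') :
    ∀ k, Par (Tm.subst k N M) (Tm.subst k N' M') := by
  induction hM with
  | sort s => intro k; exact .refl _
  | const c => intro k; exact .refl _
  | var i =>
    intro k
    simp only [Tm.subst]
    split_ifs
    · exact .var i
    · exact hN.lift k 0
    · exact .var (i-1)
  | app _ _ ihm ihn => intro k; exact .app (ihm k) (ihn k)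
  | lam _ _ iha ihm => intro k; exact .lam (iha k) (ihm (k+1))
  | pi _ _ iha ihb => intro k; exact .pi (iha k) (ihb (k+1))
  | @beta A M₁ M₁' N₁ N₁' _ _ ihm ihn =>
    intro k
    have : Tm.subst k N' (Tm.subst 0 N₁' M₁')
        = Tm.subst 0 (Tm.subst k N' N₁') (Tm.subst (k+1) N' M₁') := by
      rw [subst_subst M₁' N' N₁' 0 k (Nat.zero_le _)]
      simp
    rw [this]
    simp only [Tm.subst]
    exact .beta (ihm (k+1)) (ihn k)

/-- Complete development. -/
def cd : Tm S C → Tm S C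
  | .app (.lam _ M) N => Tm.subst 0 (cd N) (cd M)
  | .app M N => .app (cd M) (cd N)
  | .lam A M => .lam (cd A) (cd M)
  | .pi A B => .pi (cd A) (cd B)
  | t => t

theorem par_cd {M N : Tm S C} (h : Par M N) : Par N (cd M) := by
  induction h with
  | sort s => exact .refl _
  | const c => exact .refl _
  | var i => exact .refl _
  | @app M M' N N' hM hN ihm ihn =>
    cases M with
    | lam A M₁ =>
      cases hM with
      | lam hA hM₁ =>
        cases ihm with
        | lam ihA ihM₁ =>
          show Par _ (cd (Tm.app (Tm.lam A M₁) N))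
          rw [show cd (Tm.app (Tm.lam A M₁) N) = Tm.subst 0 (cd N) (cd M₁) from rfl]
          exact .beta ihM₁ ihn
    | sort s => exact .app ihm ihn
    | const c => exact .app ihm ihn
    | var i => exact .app ihm ihn
    | app a b => exact .app ihm ihn
    | pi a b => exact .app ihm ihn
  | lam _ _ iha ihm => exact .lam iha ihm
  | pi _ _ iha ihb => exact .pi iha ihb
  | @beta A M M' N N' hM hN ihm ihn =>
    show Par _ (cd (Tm.app (Tm.lam A M) N))
    rw [show cd (Tm.app (Tm.lam A M) N) = Tm.subst 0 (cd N) (cd M) from rfl]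
    exact Par.subst ihn ihm 0

theorem par_diamond : ∀ a b c : Tm S C, Par a b → Par a c →
    ∃ d, Par b d ∧ Par c d :=
  fun a _ _ hb hc => ⟨cd a, par_cd hb, par_cd hc⟩

/-- Step implies Par (β only). -/
theorem step_par {M N : Tm S C} (h : Step NoRules M N) : Par M N := by
  induction h with
  | beta => exact .beta (Par.refl _) (Par.refl _)
  | rew σ hr => exact absurd hr (fun h => h)
  | appL _ ih => exact .app ih (Par.refl _)
  | appR _ ih => exact .app (Par.refl _) ih
  | lamA _ ih => exact .lam ih (Par.refl _)
  | lamM _ ih => exact .lam (Par.refl _) ih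
  | piA _ ih => exact .pi ih (Par.refl _)
  | piB _ ih => exact .pi (Par.refl _) ih

theorem red_appL {M M' N : Tm S C} (h : BetaRed M M') :
    BetaRed (.app M N) (.app M' N) :=
  Relation.ReflTransGen.lift (fun x => Tm.app x N) (fun _ _ h => Step.appL h) _ _ h

theorem red_appR {M N N' : Tm S C} (h : BetaRed N N') :
    BetaRed (.app M N) (.app M N') :=
  Relation.ReflTransGen.lift (fun x => Tm.app M x) (fun _ _ h => Step.appR h) _ _ h

theorem red_lamA {A A' M : Tm S C} (h : BetaRed A A') :
    BetaRed (.lam A M) (.lam A' M) :=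
  Relation.ReflTransGen.lift (fun x => Tm.lam x M) (fun _ _ h => Step.lamA h) _ _ h

theorem red_lamM {A M M' : Tm S C} (h : BetaRed M M') :
    BetaRed (.lam A M) (.lam A M') :=
  Relation.ReflTransGen.lift (fun x => Tm.lam A x) (fun _ _ h => Step.lamM h) _ _ h

theorem red_piA {A A' B : Tm S C} (h : BetaRed A A') :
    BetaRed (.pi A B) (.pi A' B) :=
  Relation.ReflTransGen.lift (fun x => Tm.pi x B) (fun _ _ h => Step.piA h) _ _ h

theorem red_piB {A B B' : Tm S C} (h : BetaRed B B') :
    BetaRed (.pi A B) (.pi A B') :=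
  Relation.ReflTransGen.lift (fun x => Tm.pi A x) (fun _ _ h => Step.piB h) _ _ h

theorem par_red {M N : Tm S C} (h : Par M N) : BetaRed M N := by
  induction h with
  | sort s => exact .refl
  | const c => exact .refl
  | var i => exact .refl
  | app _ _ ihm ihn => exact (red_appL ihm).trans (red_appR ihn)
  | lam _ _ iha ihm => exact (red_lamA iha).trans (red_lamM ihm)
  | pi _ _ iha ihb => exact (red_piA iha).trans (red_piB ihb)
  | beta _ _ ihm ihn =>
    exact (((red_appL (red_lamM ihm)).trans (red_appR ihn)).trans
      (Relation.ReflTransGen.single Step.beta))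

theorem red_iff_parred {M N : Tm S C} :
    BetaRed M N ↔ Relation.ReflTransGen Par M N := by
  constructor
  · intro h
    induction h with
    | refl => exact .refl
    | tail _ h ih => exact ih.tail (step_par h)
  · intro h
    induction h with
    | refl => exact .refl
    | tail _ h ih => exact ih.trans (par_red h)

theorem beta_confluent : Confluent (@Step S C NoRules) := by
  intro a b c hab hac
  have h := Relation.church_rosser (r := @Par S C)
    (fun a b c hb hc => by
      obtain ⟨d, hbd, hcd⟩ := par_diamond a b c hb hc
      exact ⟨d, Relation.ReflGen.single hbd, Relation.ReflTransGen.single hcd⟩)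
    (red_iff_parred.1 hab) (red_iff_parred.1 hac)
  obtain ⟨d, hbd, hcd⟩ := h
  exact ⟨d, red_iff_parred.2 hbd, red_iff_parred.2 hcd⟩

theorem red_conv {M N : Tm S C} (h : BetaRed M N) : BetaConv M N := by
  induction h with
  | refl => exact .refl _
  | tail _ h ih => exact Relation.EqvGen.trans _ _ _ ih (Relation.EqvGen.rel _ _ h)

theorem conv_join {M N : Tm S C} (h : BetaConv M N) :
    ∃ d, BetaRed M d ∧ BetaRed N d := by
  induction h with
  | rel a b h => exact ⟨b, Relation.ReflTransGen.single h, .refl⟩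
  | refl a => exact ⟨a, .refl, .refl⟩
  | symm a b _ ih => exact ⟨ih.choose, ih.choose_spec.2, ih.choose_spec.1⟩
  | trans a b c _ _ ih1 ih2 =>
    obtain ⟨d1, h1, h2⟩ := ih1
    obtain ⟨d2, h3, h4⟩ := ih2
    obtain ⟨e, h5, h6⟩ := beta_confluent b d1 d2 h2 h3
    exact ⟨e, h1.trans h5, h4.trans h6⟩

/-- β-step without the (vacuous) rewrite constructor, for clean inversion. -/
inductive StepB : Tm S C → Tm S C → Prop
  | beta {A M N} : StepB (.app (.lam A M) N) (Tm.subst 0 N M)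
  | appL {M M' N} : StepB M M' → StepB (.app M N) (.app M' N)
  | appR {M N N'} : StepB N N' → StepB (.app M N) (.app M N')
  | lamA {A A' M} : StepB A A' → StepB (.lam A M) (.lam A' M)
  | lamM {A M M'} : StepB M M' → StepB (.lam A M) (.lam A M')
  | piA {A A' B} : StepB A A' → StepB (.pi A B) (.pi A' B)
  | piB {A B B'} : StepB B B' → StepB (.pi A B) (.pi A B')

theorem step_stepB {M N : Tm S C} (h : Step NoRules M N) : StepB M N := by
  induction h with
  | beta => exact .beta
  | rew σ hr => exact absurd hr (fun h => h)
  | appL _ ih => exact .appL ih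
  | appR _ ih => exact .appR ih
  | lamA _ ih => exact .lamA ih
  | lamM _ ih => exact .lamM ih
  | piA _ ih => exact .piA ih
  | piB _ ih => exact .piB ih

theorem stepB_step {M N : Tm S C} (h : StepB M N) : Step NoRules M N := by
  induction h with
  | beta => exact .beta
  | appL _ ih => exact .appL ih
  | appR _ ih => exact .appR ih
  | lamA _ ih => exact .lamA ih
  | lamM _ ih => exact .lamM ih
  | piA _ ih => exact .piA ih
  | piB _ ih => exact .piB ih

theorem sort_red {s : S} {d : Tm S C} (h : BetaRed (.sort s) d) : d = .sort s := by
  induction h with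
  | refl => rfl
  | tail _ h ih =>
    subst ih
    cases step_stepB h

theorem sort_conv_inj {s s' : S} (h : BetaConv (Tm.sort s) (Tm.sort s' : Tm S C)) :
    s = s' := by
  obtain ⟨d, h1, h2⟩ := conv_join h
  rw [sort_red h1] at h2
  have := sort_red h2
  cases this
  rfl

theorem pi_red {A B : Tm S C} {d : Tm S C} (h : BetaRed (.pi A B) d) :
    ∃ A' B', d = .pi A' B' ∧ BetaRed A A' ∧ BetaRed B B' := by
  induction h with
  | refl => exact ⟨A, B, rfl, .refl, .refl⟩
  | tail _ h ih =>
    obtain ⟨A', B', rfl, hA, hB⟩ := ih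
    cases step_stepB h with
    | piA h2 => exact ⟨_, B', rfl, hA.tail (stepB_step h2), hB⟩
    | piB h2 => exact ⟨A', _, rfl, hA, hB.tail (stepB_step h2)⟩

theorem pi_conv_inj {A B A' B' : Tm S C}
    (h : BetaConv (Tm.pi A B) (Tm.pi A' B')) :
    BetaConv A A' ∧ BetaConv B B' := by
  obtain ⟨d, h1, h2⟩ := conv_join h
  obtain ⟨A₁, B₁, rfl, hA1, hB1⟩ := pi_red h1
  obtain ⟨A₂, B₂, he, hA2, hB2⟩ := pi_red h2
  cases he
  exact ⟨Relation.EqvGen.trans _ _ _ (red_conv hA1) (Relation.EqvGen.symm _ _ (red_conv hA2)),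
    Relation.EqvGen.trans _ _ _ (red_conv hB1) (Relation.EqvGen.symm _ _ (red_conv hB2))⟩

end ParDev

end PTSAux


section TypingInv
variable {S C : Type} {sp : Spec S} {sig : C → Tm S C} {valid : C → Prop} {R : Rule S C → Prop}

theorem conv_map {f : Tm S C → Tm S C}
    (hf : ∀ x y, Step R x y → Step R (f x) (f y)) {x y : Tm S C}
    (h : Conv R x y) : Conv R (f x) (f y) := by
  induction h with
  | rel a b h => exact Relation.EqvGen.rel _ _ (hf _ _ h)
  | refl a => exact Relation.EqvGen.refl _
  | symm a b _ ih => exact Relation.EqvGen.symm _ _ ih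
  | trans a b c _ _ ih1 ih2 => exact Relation.EqvGen.trans _ _ _ ih1 ih2

theorem conv_piB {A B B' : Tm S C} (h : Conv R B B') :
    Conv R (.pi A B) (.pi A B') :=
  conv_map (fun _ _ h => Step.piB h) h

theorem step_subst {B B' : Tm S C} (h : Step NoRules B B') (k : Nat) (N : Tm S C) :
    Step NoRules (Tm.subst k N B) (Tm.subst k N B') := by
  induction h generalizing k with
  | @beta A M N₁ =>
    have : Tm.subst k N (Tm.subst 0 N₁ M)
        = Tm.subst 0 (Tm.subst k N N₁) (Tm.subst (k+1) N M) := by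
      rw [PTSAux.subst_subst M N N₁ 0 k (Nat.zero_le _)]; simp
    rw [this]
    exact Step.beta
  | rew σ hr => exact absurd hr (fun h => h)
  | appL _ ih => exact .appL (ih k)
  | appR _ ih => exact .appR (ih k)
  | lamA _ ih => exact .lamA (ih k)
  | lamM _ ih => exact .lamM (ih (k+1))
  | piA _ ih => exact .piA (ih k)
  | piB _ ih => exact .piB (ih (k+1))

theorem conv_subst {B B' : Tm S C} (h : Conv NoRules B B') (k : Nat) (N : Tm S C) :
    Conv NoRules (Tm.subst k N B) (Tm.subst k N B') :=
  conv_map (fun _ _ h => step_subst h k N) h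

/-- Statement of the generic inversion lemma. -/
def InvStmt (sp : Spec S) (sig : C → Tm S C) (valid : C → Prop) (R : Rule S C → Prop)
    (Γ : List (Tm S C)) : Tm S C → Tm S C → Prop
  | .var i, T => ∃ A, Γ[i]? = some A ∧ Conv R (A.lift (i+1) 0) T
  | .const c, T => valid c ∧ Conv R (sig c) T
  | .sort s₁, T => ∃ s₂, sp.ax s₁ s₂ ∧ Conv R (.sort s₂) T
  | .pi A B, T => ∃ s₁ s₂ s₃, Typing sp sig valid R Γ A (.sort s₁) ∧
      Typing sp sig valid R (A :: Γ) B (.sort s₂) ∧ sp.ru s₁ s₂ s₃ ∧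
      Conv R (.sort s₃) T
  | .lam A M, T => ∃ B s, Typing sp sig valid R (A :: Γ) M B ∧
      Typing sp sig valid R Γ (.pi A B) (.sort s) ∧ Conv R (.pi A B) T
  | .app M N, T => ∃ A B, Typing sp sig valid R Γ M (.pi A B) ∧
      Typing sp sig valid R Γ N A ∧ Conv R (Tm.subst 0 N B) T

theorem invStmt_conv {Γ : List (Tm S C)} {M A B : Tm S C}
    (h : InvStmt sp sig valid R Γ M A) (hc : Conv R A B) :
    InvStmt sp sig valid R Γ M B := by
  cases M with
  | sort s₁ =>
    obtain ⟨s₂, ha, hcv⟩ := h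
    exact ⟨s₂, ha, Relation.EqvGen.trans _ _ _ hcv hc⟩
  | const c =>
    obtain ⟨hv, hcv⟩ := h
    exact ⟨hv, Relation.EqvGen.trans _ _ _ hcv hc⟩
  | var i =>
    obtain ⟨A₀, hg, hcv⟩ := h
    exact ⟨A₀, hg, Relation.EqvGen.trans _ _ _ hcv hc⟩
  | app m n =>
    obtain ⟨A₀, B₀, h1, h2, hcv⟩ := h
    exact ⟨A₀, B₀, h1, h2, Relation.EqvGen.trans _ _ _ hcv hc⟩
  | lam a m =>
    obtain ⟨B₀, s₀, h1, h2, hcv⟩ := h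
    exact ⟨B₀, s₀, h1, h2, Relation.EqvGen.trans _ _ _ hcv hc⟩
  | pi a b =>
    obtain ⟨s₁, s₂, s₃, h1, h2, h3, hcv⟩ := h
    exact ⟨s₁, s₂, s₃, h1, h2, h3, Relation.EqvGen.trans _ _ _ hcv hc⟩

theorem typing_inv {Γ M T} (h : Typing sp sig valid R Γ M T) :
    InvStmt sp sig valid R Γ M T := by
  induction h using Typing.rec (motive_1 := fun _ _ => True) with
  | var hw hg => exact ⟨_, hg, Relation.EqvGen.refl _⟩
  | const hw hv => exact ⟨hv, Relation.EqvGen.refl _⟩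
  | sort hw ha => exact ⟨_, ha, Relation.EqvGen.refl _⟩
  | pi hA hB hr _ _ => exact ⟨_, _, _, hA, hB, hr, Relation.EqvGen.refl _⟩
  | lam hM hP _ _ => exact ⟨_, _, hM, hP, Relation.EqvGen.refl _⟩
  | app hM hN _ _ => exact ⟨_, _, hM, hN, Relation.EqvGen.refl _⟩
  | conv hM hB hc ihM _ => exact invStmt_conv ihM hc
  | nil => trivial
  | cons _ _ => trivial

end TypingInv

/-- uniqueness of types in a functional PTS. -/
theorem uniqueness_of_types {S : Type} (sp : Spec S) (hfun : sp.Functional)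
    {Γ : List (Tm S Empty)} {M A B : Tm S Empty}
    (hA : PTyping sp Γ M A) (hB : PTyping sp Γ M B) : BetaConv A B := by
  induction M generalizing Γ A B with
  | sort s =>
    obtain ⟨s₂, ha, hc⟩ := typing_inv hA
    obtain ⟨s₂', ha', hc'⟩ := typing_inv hB
    cases hfun.1 _ _ _ ha ha'
    exact Relation.EqvGen.trans _ _ _ (Relation.EqvGen.symm _ _ hc) hc'
  | const c => exact c.elim
  | var i =>
    obtain ⟨A₀, hg, hc⟩ := typing_inv hA
    obtain ⟨A₀', hg', hc'⟩ := typing_inv hB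
    rw [hg] at hg'
    cases hg'
    exact Relation.EqvGen.trans _ _ _ (Relation.EqvGen.symm _ _ hc) hc'
  | app m n ihm _ =>
    obtain ⟨A₁, B₁, h1, h2, hc⟩ := typing_inv hA
    obtain ⟨A₂, B₂, h1', h2', hc'⟩ := typing_inv hB
    have hpi := ihm h1 h1'
    have hB12 := (PTSAux.pi_conv_inj hpi).2
    have : BetaConv (Tm.subst 0 n B₁) (Tm.subst 0 n B₂) := conv_subst hB12 0 n
    exact Relation.EqvGen.trans _ _ _ (Relation.EqvGen.symm _ _ hc)
      (Relation.EqvGen.trans _ _ _ this hc')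
  | lam a m _ ihm =>
    obtain ⟨B₁, s₁, h1, _, hc⟩ := typing_inv hA
    obtain ⟨B₂, s₂, h1', _, hc'⟩ := typing_inv hB
    have hB12 := ihm h1 h1'
    exact Relation.EqvGen.trans _ _ _ (Relation.EqvGen.symm _ _ hc)
      (Relation.EqvGen.trans _ _ _ (conv_piB hB12) hc')
  | pi a b iha ihb =>
    obtain ⟨s₁, s₂, s₃, h1, h2, h3, hc⟩ := typing_inv hA
    obtain ⟨s₁', s₂', s₃', h1', h2', h3', hc'⟩ := typing_inv hB
    cases PTSAux.sort_conv_inj (iha h1 h1')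
    cases PTSAux.sort_conv_inj (ihb h2 h2')
    cases hfun.2 _ _ _ _ h3 h3'
    exact Relation.EqvGen.trans _ _ _ (Relation.EqvGen.symm _ _ hc) hc'
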